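/- Let F ∈ ℝ[x, y] be an irreducible polynomial whose real zero set C = {(x, y) ∈ ℝ² : F(x, y) = 0} is nonempty. Suppose there exists a nonzero vector a ∈ ℝ² such that C + a = C, where C + a := {z + a : z ∈ C}. Then C is an affine line; equivalently, F has total degree 1. -/

import Mathlib

noncomputable section
open MvPolynomial

-- Lemma A
lemma finSuccEquiv_rename_succ {n : ℕ} (q : MvPolynomial (Fin n) ℝ) :
    MvPolynomial.finSuccEquiv ℝ n (rename Fin.succ q) = Polynomial.C q := by
  induction q using MvPolynomial.induction_on with
  | C r =>
      rw [rename_C]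
      have := RingHom.congr_fun (finSuccEquiv_comp_C_eq_C n (R := ℝ)) r
      simp only [RingHom.coe_comp, RingHom.coe_coe, Function.comp_apply] at this
      rw [← this, AlgEquiv.apply_symm_apply]
  | add p q hp hq => rw [map_add, map_add, hp, hq, map_add]
  | mul_X p i hp => rw [map_mul, map_mul, hp, rename_X, finSuccEquiv_X_succ, ← Polynomial.C_mul]

-- units are nonzero constants
lemma isUnit_eq_C {n : ℕ} (Q : MvPolynomial (Fin n) ℝ) (h : IsUnit Q) :
    ∃ c : ℝ, c ≠ 0 ∧ Q = C c := by
  induction n with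
  | zero =>
      refine ⟨Q.coeff 0, ?_, Q.eq_C_of_isEmpty⟩
      intro h0
      rw [Q.eq_C_of_isEmpty, h0, map_zero] at h
      exact h.ne_zero rfl
  | succ n ih =>
      set e := MvPolynomial.finSuccEquiv ℝ n
      have hu : IsUnit (e Q) := h.map e
      have hdeg : (e Q).degree = 0 := Polynomial.degree_eq_zero_of_isUnit hu
      have heQ : e Q = Polynomial.C ((e Q).coeff 0) := Polynomial.eq_C_of_degree_eq_zero hdeg
      have hq : IsUnit ((e Q).coeff 0) := by
        rw [heQ] at hu
        exact Polynomial.isUnit_C.mp hu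
      obtain ⟨c, hc, hQc⟩ := ih _ hq
      refine ⟨c, hc, ?_⟩
      apply e.injective
      rw [heQ, hQc]
      have := finSuccEquiv_rename_succ (n := n) (C c)
      rw [rename_C] at this
      exact this.symm

lemma keyline (F : MvPolynomial (Fin 2) ℝ) (hF : Irreducible F) (p a : ℝ × ℝ)
    (ha2 : a.2 ≠ 0)
    (hline : ∀ t : ℝ, MvPolynomial.eval ![p.1 + t * a.1, p.2 + t * a.2] F = 0) :
    ∃ c : ℝ, c ≠ 0 ∧
      F = C c * (C a.2 * X 0 - C a.1 * X 1 - C (a.2 * p.1 - a.1 * p.2)) := by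
  set e := MvPolynomial.finSuccEquiv ℝ 1 with he
  set m : MvPolynomial (Fin 1) ℝ := C p.1 + C (a.1 / a.2) * (X 0 - C p.2) with hm
  set M : MvPolynomial (Fin 2) ℝ := rename Fin.succ m with hM
  -- F vanishes on the graph x = m(y)
  have key0 : ∀ s : ℝ, MvPolynomial.eval ![p.1 + (s - p.2) / a.2 * a.1, s] F = 0 := by
    intro s
    have h2 : p.2 + (s - p.2) / a.2 * a.2 = s := by field_simp; ring
    have := hline ((s - p.2) / a.2)
    rwa [h2] at this
  have hroot : Polynomial.eval m (e F) = 0 := by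
    apply MvPolynomial.funext
    intro x
    rw [map_zero, eval_polynomial_eval_finSuccEquiv]
    have hx : (Fin.cases (MvPolynomial.eval x m) x : Fin 2 → ℝ) =
        ![p.1 + (x 0 - p.2) / a.2 * a.1, x 0] := by
      funext i
      refine Fin.cases ?_ ?_ i
      · simp only [Fin.cases_zero, hm]
        simp
        field_simp
      · intro j
        fin_cases j
        simp only [Fin.cases_succ]
        rfl
    rw [hx, key0]
  have hdvd1 : (Polynomial.X - Polynomial.C m) ∣ e F :=
    Polynomial.dvd_iff_isRoot.mpr hroot
  have heM : e (X 0 - M) = Polynomial.X - Polynomial.C m := by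
    rw [map_sub, hM, finSuccEquiv_rename_succ, he, finSuccEquiv_X_zero]
  obtain ⟨P, hP⟩ := hdvd1
  have hFQ : F = (X 0 - M) * e.symm P := by
    apply e.injective
    rw [map_mul, heM, AlgEquiv.apply_symm_apply, hP]
  have hLnu : ¬ IsUnit (X 0 - M : MvPolynomial (Fin 2) ℝ) := by
    intro h
    have := h.map e
    rw [heM] at this
    exact Polynomial.not_isUnit_X_sub_C m this
  have hQu : IsUnit (e.symm P) := (hF.isUnit_or_isUnit hFQ).resolve_left hLnu
  obtain ⟨c, hc, hQc⟩ := isUnit_eq_C _ hQu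
  refine ⟨c / a.2, div_ne_zero hc ha2, ?_⟩
  -- now a polynomial identity
  have hM' : M = C p.1 + C (a.1 / a.2) * (X 1 - C p.2) := by
    rw [hM, hm]
    simp only [map_add, map_mul, map_sub, rename_C, rename_X]
    norm_num
  set r := a.1 / a.2 with hrdef
  set d := c / a.2 with hddef
  have hr : a.1 = a.2 * r := by rw [hrdef]; field_simp
  have hcd : c = d * a.2 := by rw [hddef]; field_simp
  rw [hFQ, hQc, hM', hcd, hr]
  simp only [map_mul, map_sub, map_add]
  ring

lemma final_lemma (F : MvPolynomial (Fin 2) ℝ) (c α β γ : ℝ) (hc : c ≠ 0)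
    (hαβ : ¬(α = 0 ∧ β = 0))
    (hFeq : F = C c * (C α * X 0 + C β * X 1 - C γ)) :
    (∀ z : ℝ × ℝ, (MvPolynomial.eval ![z.1, z.2] F = 0 ↔ α * z.1 + β * z.2 = γ)) ∧
      F.totalDegree = 1 := by
  constructor
  · intro z
    rw [hFeq]
    simp only [map_mul, map_add, map_sub, eval_C, eval_X]
    rw [show (![z.1, z.2] : Fin 2 → ℝ) 0 = z.1 from rfl,
      show (![z.1, z.2] : Fin 2 → ℝ) 1 = z.2 from rfl]
    rw [mul_eq_zero, sub_eq_zero]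
    simp [hc]
  · apply le_antisymm
    · rw [hFeq]
      refine le_trans (totalDegree_mul _ _) ?_
      rw [totalDegree_C, zero_add, sub_eq_add_neg, ← map_neg]
      refine le_trans (totalDegree_add _ _) ?_
      refine max_le (le_trans (totalDegree_add _ _) ?_) (by simp [totalDegree_C])
      refine max_le ?_ ?_ <;>
        refine le_trans (totalDegree_mul _ _) (by simp [totalDegree_C, totalDegree_X])
    · rcases not_and_or.mp hαβ with hα | hβ
      · have hcoeff : F.coeff (Finsupp.single 0 1) = c * α := by
          rw [hFeq]
          simp only [coeff_C_mul, coeff_add, coeff_sub, coeff_X', coeff_C,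
            Finsupp.single_eq_single_iff]
          norm_num
          exact Or.inl fun h => absurd h.symm ((fun hz => one_ne_zero (Finsupp.single_eq_zero.mp hz)))
        have hmem : Finsupp.single (0 : Fin 2) 1 ∈ F.support :=
          mem_support_iff.mpr (by rw [hcoeff]; exact mul_ne_zero hc hα)
        have := le_totalDegree hmem
        simpa using this
      · have hcoeff : F.coeff (Finsupp.single 1 1) = c * β := by
          rw [hFeq]
          simp only [coeff_C_mul, coeff_add, coeff_sub, coeff_X', coeff_C,
            Finsupp.single_eq_single_iff]
          norm_num
          exact Or.inl fun h => absurd h.symm ((fun hz => one_ne_zero (Finsupp.single_eq_zero.mp hz)))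
        have hmem : Finsupp.single (1 : Fin 2) 1 ∈ F.support :=
          mem_support_iff.mpr (by rw [hcoeff]; exact mul_ne_zero hc hβ)
        have := le_totalDegree hmem
        simpa using this

set_option maxHeartbeats 1000000 in
lemma line_in_curve (F : MvPolynomial (Fin 2) ℝ) (p a : ℝ × ℝ)
    (h : ∀ n : ℕ, MvPolynomial.eval ![p.1 + (n : ℝ) * a.1, p.2 + (n : ℝ) * a.2] F = 0) :
    ∀ t : ℝ, MvPolynomial.eval ![p.1 + t * a.1, p.2 + t * a.2] F = 0 := by
  classical
  let v : Fin 2 → Polynomial ℝ := ![Polynomial.C p.1 + Polynomial.C a.1 * Polynomial.X,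
    Polynomial.C p.2 + Polynomial.C a.2 * Polynomial.X]
  let g : Polynomial ℝ := MvPolynomial.eval₂ Polynomial.C v F
  have hgeval : ∀ t : ℝ, g.eval t = MvPolynomial.eval ![p.1 + t * a.1, p.2 + t * a.2] F := by
    intro t
    show Polynomial.eval t (MvPolynomial.eval₂ Polynomial.C v F) = _
    rw [MvPolynomial.polynomial_eval_eval₂]
    have h1 : (Polynomial.evalRingHom t).comp Polynomial.C = RingHom.id ℝ := by
      ext r; simp
    rw [h1]
    have h2 : (fun s => Polynomial.eval t (v s)) = ![p.1 + t * a.1, p.2 + t * a.2] := by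
      funext i; fin_cases i <;> simp [v] <;> ring
    rw [h2]
    exact MvPolynomial.eval₂_id F
  have hg0 : g = 0 := by
    apply Polynomial.eq_zero_of_infinite_isRoot
    apply Set.infinite_of_injective_forall_mem (f := fun n : ℕ => (n : ℝ)) Nat.cast_injective
    intro n
    show g.IsRoot ((n : ℕ) : ℝ)
    rw [Polynomial.IsRoot, hgeval]
    exact h n
  intro t
  rw [← hgeval, hg0, Polynomial.eval_zero]

set_option maxHeartbeats 1600000 in
theorem stmt3 (F : MvPolynomial (Fin 2) ℝ) (hF : Irreducible F)
    (C : Set (ℝ × ℝ))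
    (hC : C = {z : ℝ × ℝ | MvPolynomial.eval ![z.1, z.2] F = 0})
    (hne : C.Nonempty)
    (a : ℝ × ℝ) (ha : a ≠ 0)
    (hinv : (fun z : ℝ × ℝ => z + a) '' C = C) :
    (∃ α β γ : ℝ, ¬(α = 0 ∧ β = 0) ∧
        C = {z : ℝ × ℝ | α * z.1 + β * z.2 = γ}) ∧
      F.totalDegree = 1 := by
  obtain ⟨p0, hp0⟩ := hne
  have hz : ∀ z : ℝ × ℝ, z ∈ C ↔ MvPolynomial.eval ![z.1, z.2] F = 0 := by
    intro z; rw [hC]; exact Iff.rfl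
  have step : ∀ z ∈ C, z + a ∈ C := by
    intro z hzc
    rw [← hinv]
    exact ⟨z, hzc, rfl⟩
  have hptC : ∀ n : ℕ, ((p0.1 + n * a.1, p0.2 + n * a.2) : ℝ × ℝ) ∈ C := by
    intro n
    induction n with
    | zero => simpa using hp0
    | succ n ih =>
        have h2 := step _ ih
        have heq : ((p0.1 + n * a.1, p0.2 + n * a.2) : ℝ × ℝ) + a
            = (p0.1 + ((n : ℕ) + 1 : ℕ) * a.1, p0.2 + ((n : ℕ) + 1 : ℕ) * a.2) := by
          rw [Prod.ext_iff]
          constructor <;> simp <;> push_cast <;> ring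
        rwa [heq] at h2
  have hnat : ∀ n : ℕ, MvPolynomial.eval ![p0.1 + (n : ℝ) * a.1, p0.2 + (n : ℝ) * a.2] F = 0 := by
    intro n
    have h5 := (hz _).mp (hptC n)
    simpa using h5
  have hline : ∀ t : ℝ, MvPolynomial.eval ![p0.1 + t * a.1, p0.2 + t * a.2] F = 0 :=
    line_in_curve F p0 a hnat
  obtain ⟨c, hc, α, β, γ, hαβ, hFeq⟩ :
      ∃ c : ℝ, c ≠ 0 ∧ ∃ α β γ : ℝ, ¬(α = 0 ∧ β = 0) ∧
        F = MvPolynomial.C c *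
          (MvPolynomial.C α * X 0 + MvPolynomial.C β * X 1 - MvPolynomial.C γ) := by
    by_cases ha2 : a.2 = 0
    · have ha1 : a.1 ≠ 0 := by
        intro h1
        exact ha (Prod.ext h1 ha2)
      set sw : Fin 2 ≃ Fin 2 := Equiv.swap 0 1 with hsw
      set F' := rename (⇑sw) F with hF'
      have hIrr' : Irreducible F' := by
        rw [hF']
        exact (MulEquiv.irreducible_iff
          (renameEquiv ℝ sw).toRingEquiv.toMulEquiv).mpr hF
      have hline' : ∀ t : ℝ, MvPolynomial.eval ![p0.2 + t * a.2, p0.1 + t * a.1] F' = 0 := by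
        intro t
        rw [hF', eval_rename]
        have h3 : ((![p0.2 + t * a.2, p0.1 + t * a.1] : Fin 2 → ℝ) ∘ sw)
            = ![p0.1 + t * a.1, p0.2 + t * a.2] := by
          funext i
          fin_cases i <;>
            simp [hsw, Equiv.swap_apply_left, Equiv.swap_apply_right]
        rw [h3]
        exact hline t
      obtain ⟨c, hc, hFc⟩ := keyline F' hIrr' (p0.2, p0.1) (a.2, a.1) ha1 (by simpa using hline')
      refine ⟨c, hc, -a.2, a.1, a.1 * p0.2 - a.2 * p0.1, fun h => ha1 h.2, ?_⟩
      have hswsw : rename (⇑sw) F' = F := by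
        rw [hF', rename_rename]
        have h4 : (⇑sw ∘ ⇑sw) = id := by
          funext x; simp [hsw, Equiv.swap_apply_self]
        rw [h4, rename_id, AlgHom.id_apply]
      rw [← hswsw, hFc]
      simp only [map_mul, map_sub, map_add, rename_C, rename_X]
      rw [show sw 0 = 1 by simp [hsw], show sw 1 = 0 by simp [hsw], map_neg]
      ring
    · obtain ⟨c, hc, hFc⟩ := keyline F hF p0 a ha2 hline
      refine ⟨c, hc, a.2, -a.1, a.2 * p0.1 - a.1 * p0.2, fun h => ha2 h.1, ?_⟩
      rw [hFc, map_neg]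
      ring
  obtain ⟨hiff, htd⟩ := final_lemma F c α β γ hc hαβ hFeq
  refine ⟨⟨α, β, γ, hαβ, ?_⟩, htd⟩
  rw [hC]
  ext z
  simp only [Set.mem_setOf_eq]
  exact hiff z
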